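/- arXiv:1803.06481 — 4 statements merged into one kernel-verified Lean document; each statement's English description precedes it below -/
import Mathlib

section
/- If π ∈ ℤ[√2] is a prime element with 1 < π < 1 + √2, then |π̄| > 1. -/
/-- The real embedding of `ℤ[√2]`. -/
noncomputable def emb (z : Zsqrtd 2) : ℝ := z.re + z.im * Real.sqrt 2

/-- The Galois conjugate embedding `a + b√2 ↦ a - b√2`. -/
noncomputable def embConj (z : Zsqrtd 2) : ℝ := z.re - z.im * Real.sqrt 2

theorem conj_of_prime_in_fundamental_interval (π : Zsqrtd 2) (hπ : Prime π)
    (h1 : 1 < emb π) (h2 : emb π < 1 + Real.sqrt 2) : 1 < |embConj π| := by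
  by_contra hy
  push_neg at hy
  set x := emb π with hx
  set y := embConj π with hyy
  have hs2 : Real.sqrt 2 * Real.sqrt 2 = 2 := Real.mul_self_sqrt (by norm_num)
  have hmul : x * y = (π.norm : ℝ) := by
    rw [Zsqrtd.norm_def]
    simp only [hx, hyy, emb, embConj]
    push_cast
    ring_nf
    nlinarith [hs2]
  have hadd : x + y = 2 * (π.re : ℝ) := by
    simp only [hx, hyy, emb, embConj]; ring
  have hsqrt2 : (1.4 : ℝ) < Real.sqrt 2 ∧ Real.sqrt 2 < 1.5 := by
    constructor
    · nlinarith [Real.sqrt_nonneg 2, hs2]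
    · nlinarith [Real.sqrt_nonneg 2, hs2]
  -- norm is nonzero and not a unit
  have hN0 : π.norm ≠ 0 := by
    intro h
    rw [Zsqrtd.norm_eq_zero (by
      intro n hn
      have h1 := sq_nonneg (n - 1)
      have h2 := sq_nonneg (n + 1)
      have h3 := hn.symm
      have hb1 : n ≤ 1 := by nlinarith
      have hb2 : -1 ≤ n := by nlinarith
      interval_cases n <;> omega) π] at h
    exact hπ.ne_zero h
  have hN1 : π.norm.natAbs ≠ 1 := fun h =>
    hπ.not_unit (Zsqrtd.norm_eq_one_iff.mp h)
  have hNge : (2 : ℕ) ≤ π.norm.natAbs := by omega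
  -- |N| = x * |y| < 3
  have hxpos : (0 : ℝ) < x := lt_trans one_pos h1
  have habs : |(π.norm : ℝ)| = x * |y| := by
    rw [← hmul, abs_mul, abs_of_pos hxpos]
  have hNlt : |(π.norm : ℝ)| < 3 := by
    rw [habs]
    calc x * |y| ≤ x * 1 := by
          exact mul_le_mul_of_nonneg_left hy (le_of_lt hxpos)
      _ = x := mul_one x
      _ < 3 := by nlinarith [hsqrt2.2]
  have hN2 : π.norm = 2 ∨ π.norm = -2 := by
    have : |(π.norm : ℝ)| < 3 := hNlt
    rw [← Int.cast_abs] at this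
    have h3 : |π.norm| < 3 := by exact_mod_cast this
    rw [abs_lt] at h3
    omega
  -- N = ±2 is even, so re is even
  have hre_even : Even π.re := by
    have hnd : π.norm = π.re * π.re - 2 * (π.im * π.im) := by rw [Zsqrtd.norm_def]; ring
    have hev : Even (π.re * π.re) := by
      rcases hN2 with h | h
      · exact ⟨π.im * π.im + 1, by omega⟩
      · exact ⟨π.im * π.im - 1, by omega⟩
    rcases Int.even_mul.mp hev with h | h <;> exact h
  -- x + y = 2 re with 0 < 2 re < 4, contradiction with re even
  have hy' : -1 ≤ y := neg_le_of_abs_le hy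
  have hpos : (0 : ℝ) < 2 * (π.re : ℝ) := by rw [← hadd]; linarith
  have hlt : 2 * (π.re : ℝ) < 4 := by
    rw [← hadd]
    have := abs_le.mp hy
    nlinarith [hsqrt2.2]
  have h1' : (0 : ℤ) < 2 * π.re := by exact_mod_cast (by push_cast; linarith : ((0:ℤ):ℝ) < ((2 * π.re : ℤ) : ℝ))
  have h2' : (2 : ℤ) * π.re < 4 := by exact_mod_cast (by push_cast; linarith : (((2 * π.re : ℤ)) : ℝ) < ((4:ℤ):ℝ))
  rcases hre_even with ⟨k, hk⟩
  omega
end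

section
/- Every prime element of ℤ[√2] is associated to exactly one prime π satisfying 1 < π < 1 + √2. -/
noncomputable def embHom : Zsqrtd 2 →+* ℝ :=
  Zsqrtd.lift ⟨Real.sqrt 2, by
    rw [Real.mul_self_sqrt (by norm_num : (0:ℝ) ≤ 2)]; norm_num⟩

lemma emb_eq (z : Zsqrtd 2) : emb z = embHom z := rfl

lemma emb_mul (a b : Zsqrtd 2) : emb (a * b) = emb a * emb b := by
  simp [emb_eq, map_mul]

lemma emb_one : emb 1 = 1 := by simp [emb_eq]

lemma emb_inj : Function.Injective emb :=
  Zsqrtd.lift_injective (R := ℝ) (d := 2)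
    ⟨Real.sqrt 2, by rw [Real.mul_self_sqrt (by norm_num : (0:ℝ) ≤ 2)]; norm_num⟩
    (fun n h => Int.prime_two.not_isSquare ⟨n, h⟩)

lemma sqrt2_lt : Real.sqrt 2 < 1.5 := by
  nlinarith [Real.sq_sqrt (by norm_num : (0:ℝ) ≤ 2), Real.sqrt_nonneg 2]

lemma sqrt2_gt : 1.4 < Real.sqrt 2 := by
  nlinarith [Real.sq_sqrt (by norm_num : (0:ℝ) ≤ 2), Real.sqrt_nonneg 2]

/-- The fundamental unit `1 + √2`. -/
def eps : (Zsqrtd 2)ˣ where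
  val := ⟨1, 1⟩
  inv := ⟨-1, 1⟩
  val_inv := by ext <;> simp [Zsqrtd.re_mul, Zsqrtd.im_mul]
  inv_val := by ext <;> simp [Zsqrtd.re_mul, Zsqrtd.im_mul]

lemma emb_eps : emb (eps : Zsqrtd 2) = 1 + Real.sqrt 2 := by
  simp [emb, eps]

lemma emb_eps_zpow (k : ℤ) : emb ((eps ^ k : (Zsqrtd 2)ˣ) : Zsqrtd 2) = (1 + Real.sqrt 2) ^ k := by
  have h1 : (0:ℝ) < 1 + Real.sqrt 2 := by positivity
  induction k using Int.induction_on with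
  | zero => simpa using emb_one
  | succ n ih =>
      rw [zpow_add_one, Units.val_mul, emb_mul, ih, emb_eps, zpow_add_one₀ h1.ne']
  | pred n ih =>
      have h2 : emb ((eps ^ (-(n:ℤ) - 1) : (Zsqrtd 2)ˣ) : Zsqrtd 2) * emb (eps : Zsqrtd 2)
          = emb ((eps ^ (-(n:ℤ)) : (Zsqrtd 2)ˣ) : Zsqrtd 2) := by
        rw [← emb_mul, ← Units.val_mul, ← zpow_add_one, sub_add_cancel]
      rw [ih, emb_eps] at h2
      rw [zpow_sub_one₀ h1.ne', ← div_eq_mul_inv, eq_div_iff h1.ne']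
      exact h2

/-- key unit lemma : a unit whose embedding lies in (√2 - 1, √2 + 1) is 1. -/
lemma unit_triv (u : (Zsqrtd 2)ˣ) (h1 : Real.sqrt 2 - 1 < emb (u : Zsqrtd 2))
    (h2 : emb (u : Zsqrtd 2) < Real.sqrt 2 + 1) : (u : Zsqrtd 2) = 1 := by
  set s := Real.sqrt 2 with hs
  have hss : s * s = 2 := Real.mul_self_sqrt (by norm_num)
  have hslt : s < 1.5 := sqrt2_lt
  have hsgt : 1.4 < s := sqrt2_gt
  set a := (u : Zsqrtd 2).re with ha
  set b := (u : Zsqrtd 2).im with hb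
  have hnorm : (u : Zsqrtd 2).norm = 1 ∨ (u : Zsqrtd 2).norm = -1 := by
    have : IsUnit ((u : Zsqrtd 2).norm) := by
      refine IsUnit.of_mul_eq_one ((u⁻¹ : (Zsqrtd 2)ˣ) : Zsqrtd 2).norm ?_
      rw [← Zsqrtd.norm_mul, Units.mul_inv, Zsqrtd.norm_one]
    exact Int.isUnit_iff.mp this
  have hembu : emb (u : Zsqrtd 2) = a + b * s := rfl
  have hnormval : (u : Zsqrtd 2).norm = a * a - 2 * (b * b) := by
    simp [Zsqrtd.norm, ha, hb]; ring
  have key : (a + b * s) * (a - b * s) = ((u : Zsqrtd 2).norm : ℝ) := by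
    rw [hnormval]; push_cast; linear_combination (-((b:ℝ) * b)) * hss
  rw [hembu] at h1 h2
  have hpos : (0:ℝ) < a + b * s := by linarith
  -- bound a
  have hab : b = 0 ∧ a = 1 := by
    rcases hnorm with hn | hn
    · rw [hn] at key
      push_cast at key
      have hy1 : (a : ℝ) - b * s < s + 1 := by nlinarith
      have hy2 : s - 1 < (a : ℝ) - b * s := by nlinarith
      have ha1 : (0:ℝ) < a := by nlinarith
      have ha2 : (a:ℝ) < 3 := by nlinarith
      have ha1' : 0 < a := by exact_mod_cast ha1
      have ha2' : a < 3 := by exact_mod_cast ha2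
      rw [hn] at hnormval
      have ha12 : a = 1 ∨ a = 2 := by omega
      rcases ha12 with h | h
      · refine ⟨?_, h⟩
        rw [h] at hnormval
        have hb2 : b * b = 0 := by linarith
        exact mul_self_eq_zero.mp hb2
      · exfalso
        rw [h] at hnormval
        have hdvd : (2:ℤ) ∣ 3 := ⟨b * b, by linarith⟩
        norm_num at hdvd
    · rw [hn] at key
      push_cast at key
      have hy1 : (a : ℝ) - b * s < -(s - 1) := by nlinarith
      have hy2 : -(s + 1) < (a : ℝ) - b * s := by nlinarith
      have ha1 : (-1:ℝ) < a := by nlinarith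
      have ha2 : (a:ℝ) < 1 := by nlinarith
      have ha1' : (-1:ℤ) < a := by exact_mod_cast ha1
      have ha2' : a < 1 := by exact_mod_cast ha2
      have ha0 : a = 0 := by omega
      rw [hn, ha0] at hnormval
      exfalso
      have hdvd : (2:ℤ) ∣ 1 := ⟨b * b, by linarith⟩
      norm_num at hdvd
  ext <;> simp [← ha, ← hb, hab.1, hab.2]

theorem prime_has_unique_associate_in_fundamental_interval (p : Zsqrtd 2) (hp : Prime p) :
    ∃! q : Zsqrtd 2, Prime q ∧ 1 < emb q ∧ emb q < 1 + Real.sqrt 2 ∧ Associated p q := by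
  have hs : (0:ℝ) ≤ 2 := by norm_num
  have hss : Real.sqrt 2 * Real.sqrt 2 = 2 := Real.mul_self_sqrt hs
  have ht1 : (1:ℝ) < 1 + Real.sqrt 2 := by nlinarith [sqrt2_gt]
  -- pick p' associated to p with positive embedding
  have hp0 : emb p ≠ 0 := by
    intro h
    exact hp.ne_zero (emb_inj (h.trans (by simp [emb])))
  obtain ⟨p', hpp', hpos⟩ : ∃ p', Associated p p' ∧ 0 < emb p' := by
    rcases lt_or_gt_of_ne hp0 with h | h
    · refine ⟨-p, ⟨-1, by simp⟩, ?_⟩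
      have : emb (-p) = -emb p := by simp [emb]; ring
      rw [this]; linarith
    · exact ⟨p, Associated.refl p, h⟩
  obtain ⟨n, hn⟩ := exists_mem_Ico_zpow hpos ht1
  obtain ⟨hn1, hn2⟩ := hn
  set q : Zsqrtd 2 := p' * ((eps ^ (-n) : (Zsqrtd 2)ˣ) : Zsqrtd 2) with hq
  have hassoc : Associated p q := hpp'.trans ⟨eps ^ (-n), rfl⟩
  have hqprime : Prime q := hassoc.prime hp
  have htpos : (0:ℝ) < 1 + Real.sqrt 2 := by linarith
  have hembq : emb q = emb p' * (1 + Real.sqrt 2) ^ (-n) := by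
    rw [hq, emb_mul, emb_eps_zpow]
  have hq1' : 1 ≤ emb q := by
    rw [hembq]
    calc (1:ℝ) = (1 + Real.sqrt 2) ^ n * (1 + Real.sqrt 2) ^ (-n) := by
          rw [← zpow_add₀ htpos.ne']; simp
      _ ≤ emb p' * (1 + Real.sqrt 2) ^ (-n) := by
          have := zpow_pos htpos (-n)
          nlinarith [hn1]
  have hq2 : emb q < 1 + Real.sqrt 2 := by
    rw [hembq]
    calc emb p' * (1 + Real.sqrt 2) ^ (-n) < (1 + Real.sqrt 2) ^ (n + 1) * (1 + Real.sqrt 2) ^ (-n) := by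
          have := zpow_pos htpos (-n)
          nlinarith [hn2]
      _ = 1 + Real.sqrt 2 := by
          rw [← zpow_add₀ htpos.ne']; norm_num
  have hq1 : 1 < emb q := by
    rcases lt_or_eq_of_le hq1' with h | h
    · exact h
    · exfalso
      have : q = 1 := emb_inj (by rw [← h, emb_one])
      exact hqprime.not_unit (this ▸ isUnit_one)
  refine ⟨q, ⟨hqprime, hq1, hq2, hassoc⟩, ?_⟩
  rintro r ⟨hr, hr1, hr2, hra⟩
  obtain ⟨u, hu⟩ := (hassoc.symm.trans hra)
  have hembr : emb r = emb q * emb (u : Zsqrtd 2) := by rw [← hu, emb_mul]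
  have hupos : 0 < emb (u : Zsqrtd 2) := by nlinarith
  have hub1 : Real.sqrt 2 - 1 < emb (u : Zsqrtd 2) := by nlinarith
  have hub2 : emb (u : Zsqrtd 2) < Real.sqrt 2 + 1 := by nlinarith
  have := unit_triv u hub1 hub2
  rw [← hu, this, mul_one]
end

section
/- If c ∈ ℤ[√2] satisfies |N(c)| = 2, where N(c) = c·c̄ is the field norm, then c is associated to √2. -/
theorem norm_two_associated_sqrt_two (c : Zsqrtd 2) (h : |Zsqrtd.norm c| = 2) :
    Associated c ⟨0, 1⟩ := by
  have hn : Zsqrtd.norm c = c.re * c.re - 2 * (c.im * c.im) := by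
    simp [Zsqrtd.norm_def]; ring
  have h2 : Zsqrtd.norm c = 2 ∨ Zsqrtd.norm c = -2 := by
    rcases abs_eq (by norm_num : (0:ℤ) ≤ 2) |>.mp h with h' | h' <;> simp [h']
  have heven : Even c.re := by
    have hsq : Even (c.re * c.re) := by
      rcases h2 with h' | h'
      · exact ⟨c.im * c.im + 1, by rw [hn] at h'; linarith⟩
      · exact ⟨c.im * c.im - 1, by rw [hn] at h'; linarith⟩
    exact (Int.even_mul.mp hsq).elim id id
  rcases heven with ⟨k, hk⟩
  have hc : c = (⟨0, 1⟩ : Zsqrtd 2) * ⟨c.im, k⟩ := by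
    ext <;> simp [Zsqrtd.re_mul, Zsqrtd.im_mul] <;> omega
  have hq : IsUnit (⟨c.im, k⟩ : Zsqrtd 2) := by
    rw [← Zsqrtd.norm_eq_one_iff]
    have := Zsqrtd.norm_mul (⟨0, 1⟩ : Zsqrtd 2) ⟨c.im, k⟩
    rw [← hc] at this
    have hs : Zsqrtd.norm (⟨0, 1⟩ : Zsqrtd 2) = -2 := by simp [Zsqrtd.norm_def]
    rw [hs] at this
    rcases h2 with h' | h' <;> · rw [h'] at this; omega
  exact (Associated.symm ⟨hq.unit, by rw [IsUnit.unit_spec, ← hc]⟩)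
end

section
/- Let 𝒫 ⊂ ℝ^d be locally finite and C ⊂ ℝ_{>1} a set such that for each x ∈ 𝒫 \ 𝒫̂ there exists c ∈ C with x/c ∈ 𝒫. Then for R > 0 and bounded D ⊂ ℝ^d: #(𝒫̂ ∩ RD) = ∑ over finite subsets F ⊂ C of (−1)^{#F} · #((𝒫_* ∩ ⋂_{c∈F} c𝒫_*) ∩ RD), where the sum has only finitely many nonzero terms. -/
open Pointwise

theorem visible_count_inclusion_exclusion (d : ℕ) (P : Set (Fin d → ℝ)) (C : Set ℝ)
    (hP : ∀ B : Set (Fin d → ℝ), Bornology.IsBounded B → (P ∩ B).Finite)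
    (hC : C ⊆ Set.Ioi (1 : ℝ))
    (hocc : ∀ x ∈ P \ {x ∈ P | ∀ t : ℝ, 0 < t → t < 1 → t • x ∉ P},
      ∃ c ∈ C, c⁻¹ • x ∈ P)
    (R : ℝ) (hR : 0 < R) (D : Set (Fin d → ℝ)) (hD : Bornology.IsBounded D) :
    (Function.support (fun F : {F : Finset ℝ // ↑F ⊆ C} =>
        ((-1 : ℤ) ^ F.1.card *
          (((P \ {0}) ∩ ⋂ c ∈ F.1, c • (P \ {0})) ∩ R • D).ncard))).Finite ∧
    (({x ∈ P | ∀ t : ℝ, 0 < t → t < 1 → t • x ∉ P} ∩ R • D).ncard : ℤ) =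
      ∑ᶠ F : {F : Finset ℝ // ↑F ⊆ C},
        (-1 : ℤ) ^ F.1.card *
          (((P \ {0}) ∩ ⋂ c ∈ F.1, c • (P \ {0})) ∩ R • D).ncard := by
  classical
  set Pstar : Set (Fin d → ℝ) := P \ {0} with hPstar
  -- finiteness of the ambient set A = Pstar ∩ R • D
  have hRD : Bornology.IsBounded (R • D) := hD.smul₀ R
  have hA : (Pstar ∩ R • D).Finite :=
    (hP (R • D) hRD).subset (fun x hx => ⟨hx.1.1, hx.2⟩)
  set T : Finset (Fin d → ℝ) := hA.toFinset with hT
  have hmemT : ∀ x, x ∈ T ↔ x ∈ Pstar ∩ R • D := fun x => hA.mem_toFinset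
  -- the "scale set" of a point
  set S : (Fin d → ℝ) → Set ℝ := fun x => {c ∈ C | x ∈ c • Pstar} with hS
  have hcne : ∀ c ∈ C, c ≠ 0 := fun c hc =>
    ne_of_gt (lt_trans one_pos (hC hc))
  have hSmem : ∀ x c, c ∈ S x ↔ c ∈ C ∧ x ∈ c • Pstar := fun x c => Iff.rfl
  have hsmul_iff : ∀ (c : ℝ), c ∈ C → ∀ x, (x ∈ c • Pstar ↔ c⁻¹ • x ∈ Pstar) := by
    intro c hc x
    exact Set.mem_smul_set_iff_inv_smul_mem₀ (hcne c hc) _ _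
  -- S x is finite
  have hSfin : ∀ x, (S x).Finite := by
    intro x
    by_cases hx : x = 0
    · subst hx
      convert Set.finite_empty
      ext c
      simp only [hS, Set.mem_setOf_eq, Set.mem_empty_iff_false, iff_false, not_and]
      intro hc hmem
      have := (hsmul_iff c hc 0).1 hmem
      rw [smul_zero] at this
      exact this.2 rfl
    · have himg : ((fun c : ℝ => c⁻¹ • x) '' S x).Finite := by
        apply (hP (Metric.closedBall 0 ‖x‖) Metric.isBounded_closedBall).subset
        rintro y ⟨c, hc, rfl⟩
        have hcC := hc.1
        have hmem := (hsmul_iff c hcC x).1 hc.2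
        refine ⟨hmem.1, ?_⟩
        rw [Metric.mem_closedBall, dist_zero_right, norm_smul, norm_inv]
        have h1 : (1:ℝ) < c := hC hcC
        calc ‖c‖⁻¹ * ‖x‖ ≤ 1 * ‖x‖ := by
              apply mul_le_mul_of_nonneg_right _ (norm_nonneg x)
              rw [inv_le_one_iff₀]
              right
              rw [Real.norm_eq_abs]
              exact le_trans h1.le (le_abs_self c)
          _ = ‖x‖ := one_mul _
      refine Set.Finite.of_finite_image himg ?_
      intro c hc c' hc' hcc
      have hcc' : c⁻¹ • x = c'⁻¹ • x := hcc
      have hz : (c⁻¹ - c'⁻¹) • x = 0 := by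
        rw [sub_smul, hcc', sub_self]
      rcases smul_eq_zero.1 hz with h | h
      · exact inv_injective (by linarith [sub_eq_zero.1 h])
      · exact absurd h hx
  -- finite union of all scale sets over T
  set U : Finset ℝ := T.biUnion (fun x => (hSfin x).toFinset) with hU
  have hSsubU : ∀ x ∈ T, (hSfin x).toFinset ⊆ U := by
    intro x hx c hc
    exact Finset.mem_biUnion.2 ⟨x, hx, hc⟩
  -- description of the term sets
  have hterm : ∀ F : {F : Finset ℝ // ↑F ⊆ C},
      ((Pstar ∩ ⋂ c ∈ F.1, c • Pstar) ∩ R • D) =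
        ↑(T.filter (fun x => ∀ c ∈ F.1, c ∈ S x)) := by
    rintro ⟨F, hF⟩
    ext x
    simp only [Finset.coe_filter, Set.mem_setOf_eq, hmemT, Set.mem_inter_iff,
      Set.mem_iInter, hSmem]
    constructor
    · rintro ⟨⟨hx1, hx2⟩, hx3⟩
      exact ⟨⟨hx1, hx3⟩, fun c hc => ⟨hF hc, hx2 c hc⟩⟩
    · rintro ⟨⟨hx1, hx3⟩, hx2⟩
      exact ⟨⟨hx1, fun c hc => (hx2 c hc).2⟩, hx3⟩
  have hncard : ∀ F : {F : Finset ℝ // ↑F ⊆ C},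
      (((Pstar ∩ ⋂ c ∈ F.1, c • Pstar) ∩ R • D)).ncard =
        (T.filter (fun x => ∀ c ∈ F.1, c ∈ S x)).card := by
    intro F
    rw [hterm F, Set.ncard_coe_finset]
  -- term as a sum over T
  have htermsum : ∀ F : {F : Finset ℝ // ↑F ⊆ C},
      ((-1 : ℤ) ^ F.1.card *
        (((Pstar ∩ ⋂ c ∈ F.1, c • Pstar) ∩ R • D)).ncard) =
      ∑ x ∈ T, (if ∀ c ∈ F.1, c ∈ S x then (-1 : ℤ) ^ F.1.card else 0) := by
    intro F
    rw [hncard F, ← Finset.sum_filter, Finset.sum_const, nsmul_eq_mul, mul_comm]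
  -- the finset of potentially contributing F's
  set 𝔽 : Finset {F : Finset ℝ // ↑F ⊆ C} :=
    U.powerset.subtype (fun F => ↑F ⊆ C) with h𝔽
  have hmem𝔽 : ∀ F : {F : Finset ℝ // (↑F : Set ℝ) ⊆ C}, F ∈ 𝔽 ↔ F.1 ⊆ U := by
    intro F
    rw [h𝔽, Finset.mem_subtype, Finset.mem_powerset]
  -- support is contained in 𝔽
  have hsupp : Function.support (fun F : {F : Finset ℝ // ↑F ⊆ C} =>
      ((-1 : ℤ) ^ F.1.card *
        (((Pstar ∩ ⋂ c ∈ F.1, c • Pstar) ∩ R • D)).ncard)) ⊆ ↑𝔽 := by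
    intro F hF
    rw [Function.mem_support] at hF
    have hnc : (((Pstar ∩ ⋂ c ∈ F.1, c • Pstar) ∩ R • D)).ncard ≠ 0 := by
      intro h
      rw [h] at hF
      simp at hF
    rw [hncard F] at hnc
    obtain ⟨x, hxmem⟩ := Finset.card_ne_zero.1 hnc
    rw [Finset.mem_filter] at hxmem
    rw [Finset.mem_coe, hmem𝔽]
    intro c hc
    exact hSsubU x hxmem.1 ((hSfin x).mem_toFinset.2 (hxmem.2 c hc))
  constructor
  · exact 𝔽.finite_toSet.subset hsupp
  -- compute the RHS
  have hRHS : (∑ᶠ F : {F : Finset ℝ // ↑F ⊆ C},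
      (-1 : ℤ) ^ F.1.card *
        (((Pstar ∩ ⋂ c ∈ F.1, c • Pstar) ∩ R • D)).ncard) =
      ((T.filter (fun x => S x = ∅)).card : ℤ) := by
    rw [finsum_eq_finset_sum_of_support_subset _ hsupp]
    calc (∑ F ∈ 𝔽, (-1 : ℤ) ^ F.1.card *
            (((Pstar ∩ ⋂ c ∈ F.1, c • Pstar) ∩ R • D)).ncard)
        = ∑ F ∈ 𝔽, ∑ x ∈ T,
            (if ∀ c ∈ F.1, c ∈ S x then (-1 : ℤ) ^ F.1.card else 0) := by
          exact Finset.sum_congr rfl (fun F _ => htermsum F)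
      _ = ∑ x ∈ T, ∑ F ∈ 𝔽,
            (if ∀ c ∈ F.1, c ∈ S x then (-1 : ℤ) ^ F.1.card else 0) :=
          Finset.sum_comm
      _ = ∑ x ∈ T, (if S x = ∅ then (1 : ℤ) else 0) := by
          refine Finset.sum_congr rfl (fun x hx => ?_)
          have hbij : ∑ F ∈ 𝔽,
              (if ∀ c ∈ F.1, c ∈ S x then (-1 : ℤ) ^ F.1.card else 0) =
              ∑ G ∈ ((hSfin x).toFinset).powerset, (-1 : ℤ) ^ G.card := by
            rw [← Finset.sum_filter]
            refine Finset.sum_bij (fun F _ => F.1) ?_ ?_ ?_ ?_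
            · rintro ⟨F, hFC⟩ hF
              rw [Finset.mem_filter] at hF
              rw [Finset.mem_powerset]
              intro c hc
              exact (hSfin x).mem_toFinset.2 (hF.2 c hc)
            · rintro ⟨F, hFC⟩ hF ⟨G, hGC⟩ hG h
              exact Subtype.ext h
            · intro G hG
              rw [Finset.mem_powerset] at hG
              have hGS : ∀ c ∈ G, c ∈ S x := fun c hc =>
                (hSfin x).mem_toFinset.1 (hG hc)
              have hGC : ↑G ⊆ C := fun c hc => (hGS c hc).1
              refine ⟨⟨G, hGC⟩, ?_, rfl⟩
              rw [Finset.mem_filter, hmem𝔽]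
              exact ⟨fun c hc => hSsubU x hx (hG hc), hGS⟩
            · intro F _
              rfl
          rw [hbij, Finset.sum_powerset_neg_one_pow_card]
          congr 1
          rw [Set.Finite.toFinset_eq_empty, eq_iff_iff]
      _ = ((T.filter (fun x => S x = ∅)).card : ℤ) := by
          rw [Finset.sum_boole]
  rw [hRHS]
  -- identify the LHS
  have hLHS : ({x ∈ P | ∀ t : ℝ, 0 < t → t < 1 → t • x ∉ P} ∩ R • D) =
      ↑(T.filter (fun x => S x = ∅)) := by
    ext x
    simp only [Finset.coe_filter, Set.mem_setOf_eq, hmemT, Set.mem_inter_iff]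
    constructor
    · rintro ⟨⟨hxP, hcond⟩, hxRD⟩
      have hx0 : x ≠ 0 := by
        intro h
        subst h
        exact hcond (1/2) (by norm_num) (by norm_num) (by rwa [smul_zero])
      refine ⟨⟨⟨hxP, hx0⟩, hxRD⟩, ?_⟩
      ext c
      simp only [hSmem, Set.mem_empty_iff_false, iff_false, not_and]
      intro hcC hmem
      have h1 : (1:ℝ) < c := hC hcC
      have := ((hsmul_iff c hcC x).1 hmem).1
      exact hcond c⁻¹ (inv_pos.2 (lt_trans one_pos h1)) (inv_lt_one_of_one_lt₀ h1) this
    · rintro ⟨⟨⟨hxP, hx0⟩, hxRD⟩, hSx⟩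
      refine ⟨⟨hxP, ?_⟩, hxRD⟩
      intro t ht0 ht1 htP
      by_contra _
      have hxmem : x ∈ P \ {x ∈ P | ∀ t : ℝ, 0 < t → t < 1 → t • x ∉ P} := by
        refine ⟨hxP, ?_⟩
        intro h
        exact h.2 t ht0 ht1 htP
      obtain ⟨c, hcC, hcP⟩ := hocc x hxmem
      have hcmem : c ∈ S x := by
        rw [hSmem, hsmul_iff c hcC]
        exact ⟨hcC, hcP, smul_ne_zero (inv_ne_zero (hcne c hcC)) hx0⟩
      rw [hSx] at hcmem
      exact hcmem
  rw [hLHS, Set.ncard_coe_finset]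
end
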